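/- (Modified Lax–Milgram.) Let H be a real Hilbert space, V a real normed vector space, and j : V → H a continuous linear map with dense range. Let a : H × V → ℝ be a bilinear form such that there exist constants C > 0 and δ > 0 with |a(u, v)| ≤ C ‖u‖_H ‖v‖_V for all u ∈ H, v ∈ V, and a(j v, v) ≥ δ ‖j v‖_H² for all v ∈ V. Then for every bounded linear functional F : H → ℝ there exists u ∈ H such that F(j v) = a(u, v) for all v ∈ V. -/

import Mathlib

/-- Modified Lax–Milgram theorem: `H` a real Hilbert space, `V` a normed space,
`j : V → H` continuous linear with dense range, and `a` a bilinear form on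
`H × V` which is bounded (`|a u v| ≤ C ‖u‖ ‖v‖`) and coercive along `j`
(`a (j v) v ≥ δ ‖j v‖²`). Then every bounded linear functional `F` on `H`
is represented on the image of `j`: `F (j v) = a u v` for some `u`. -/
theorem stmt8 {H V : Type*}
    [NormedAddCommGroup H] [InnerProductSpace ℝ H] [CompleteSpace H]
    [NormedAddCommGroup V] [NormedSpace ℝ V]
    (j : V →L[ℝ] H) (hj : DenseRange j)
    (a : H →ₗ[ℝ] V →ₗ[ℝ] ℝ)
    (C δ : ℝ) (hC : 0 < C) (hδ : 0 < δ)
    (hbound : ∀ (u : H) (v : V), |a u v| ≤ C * ‖u‖ * ‖v‖)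
    (hcoercive : ∀ v : V, δ * ‖j v‖ ^ 2 ≤ a (j v) v)
    (F : H →L[ℝ] ℝ) :
    ∃ u : H, ∀ v : V, F (j v) = a u v := by
  classical
  -- Riesz representatives of `u ↦ a u v`
  have key : ∀ v : V, ∃ w : H, ∀ u : H, a u v = inner ℝ w u := by
    intro v
    have hb : ∀ u : H, ‖a.flip v u‖ ≤ (C * ‖v‖) * ‖u‖ := by
      intro u
      have := hbound u v
      simp only [LinearMap.flip_apply, Real.norm_eq_abs]
      nlinarith [this]
    let f : H →L[ℝ] ℝ := LinearMap.mkContinuous (a.flip v) (C * ‖v‖) hb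
    refine ⟨(InnerProductSpace.toDual ℝ H).symm f, fun u => ?_⟩
    have := InnerProductSpace.toDual_symm_apply (𝕜 := ℝ) (E := H) (y := f) (x := u)
    simpa [f, LinearMap.mkContinuous_apply] using this.symm
  choose A hA using key
  have hAadd : ∀ v w : V, A (v + w) = A v + A w := by
    intro v w
    refine ext_inner_right ℝ fun u => ?_
    rw [inner_add_left, ← hA, ← hA, ← hA, map_add]
  have hAsmul : ∀ (c : ℝ) (v : V), A (c • v) = c • A v := by
    intro c v
    refine ext_inner_right ℝ fun u => ?_
    rw [inner_smul_left, ← hA, ← hA, map_smul]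
    simp
  let Alin : V →ₗ[ℝ] H :=
    { toFun := A, map_add' := hAadd, map_smul' := hAsmul }
  -- functional `v ↦ F (j v)`
  let ψ : V →ₗ[ℝ] ℝ := (F : H →ₗ[ℝ] ℝ).comp (j : V →ₗ[ℝ] H)
  -- key norm bound : δ ‖j v‖ ≤ ‖A v‖
  have hnorm : ∀ v : V, δ * ‖j v‖ ≤ ‖A v‖ := by
    intro v
    rcases eq_or_ne (j v) 0 with h | h
    · simp [h, norm_nonneg]
    · have h1 : δ * ‖j v‖ ^ 2 ≤ inner ℝ (A v) (j v) := by
        rw [← hA]; exact hcoercive v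
      have h2 : (inner ℝ (A v) (j v) : ℝ) ≤ ‖A v‖ * ‖j v‖ := real_inner_le_norm _ _
      have hpos : 0 < ‖j v‖ := norm_pos_iff.mpr h
      nlinarith
  have hker : LinearMap.ker Alin ≤ LinearMap.ker ψ := by
    intro v hv
    have hv' : A v = 0 := hv
    have h1 : δ * ‖j v‖ ≤ 0 := by simpa [hv'] using hnorm v
    have h0 : j v = 0 := by
      have := norm_nonneg (j v)
      have : ‖j v‖ = 0 := le_antisymm (by nlinarith) this
      exact norm_eq_zero.mp this
    simp [ψ, LinearMap.mem_ker, h0]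
  -- functional on range of Alin
  let g0 : LinearMap.range Alin →ₗ[ℝ] ℝ :=
    ((LinearMap.ker Alin).liftQ ψ hker).comp
      (Alin.quotKerEquivRange.symm : LinearMap.range Alin →ₗ[ℝ] V ⧸ LinearMap.ker Alin)
  have hg0 : ∀ v : V, ∀ h, g0 ⟨Alin v, h⟩ = F (j v) := by
    intro v h
    have : Alin.quotKerEquivRange.symm ⟨Alin v, h⟩ =
        (LinearMap.ker Alin).mkQ v := Alin.quotKerEquivRange_symm_apply_image v h
    simp [g0, this, ψ]
  have hg0bound : ∀ x : LinearMap.range Alin, ‖g0 x‖ ≤ (‖F‖ / δ) * ‖x‖ := by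
    rintro ⟨x, hx⟩
    obtain ⟨v, rfl⟩ := hx
    rw [hg0 v ⟨v, rfl⟩]
    have h1 : ‖F (j v)‖ ≤ ‖F‖ * ‖j v‖ := F.le_opNorm _
    have h2 : δ * ‖j v‖ ≤ ‖A v‖ := hnorm v
    have hxnorm : ‖(⟨Alin v, ⟨v, rfl⟩⟩ : LinearMap.range Alin)‖ = ‖A v‖ := rfl
    rw [hxnorm]
    have hFnn : 0 ≤ ‖F‖ := norm_nonneg _
    rw [div_mul_eq_mul_div, le_div_iff₀ hδ]
    nlinarith [norm_nonneg (j v)]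
  let g0c : LinearMap.range Alin →L[ℝ] ℝ := LinearMap.mkContinuous g0 (‖F‖ / δ) hg0bound
  obtain ⟨g, hg, -⟩ := exists_extension_norm_eq (LinearMap.range Alin) g0c
  refine ⟨(InnerProductSpace.toDual ℝ H).symm g, fun v => ?_⟩
  have h1 : a ((InnerProductSpace.toDual ℝ H).symm g) v
      = inner ℝ (A v) ((InnerProductSpace.toDual ℝ H).symm g) := hA v _
  rw [h1, real_inner_comm, InnerProductSpace.toDual_symm_apply]
  have h3 : g0c ⟨Alin v, ⟨v, rfl⟩⟩ = F (j v) := hg0 v _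
  have h4 : g (A v) = F (j v) := by
    have h2 := hg ⟨Alin v, ⟨v, rfl⟩⟩
    rw [h3] at h2
    exact h2
  rw [h4]
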